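/- Let z ∈ F_ℤ. Then I(z) is the identity permutation of ℤ if and only if z = Θ. -/

import Mathlib

open Equiv

noncomputable section

/-- The function underlying the permutation `Θ : i ↦ i - (-1)^i` of `ℤ`. -/
def thetaFun (i : ℤ) : ℤ := if Even i then i - 1 else i + 1

theorem thetaFun_invol : Function.Involutive thetaFun := by
  intro i
  unfold thetaFun
  by_cases h : Even i
  · have h1 : ¬ Even (i - 1) := by simp [Int.even_sub_one, h]
    simp [h, h1]
  · have h1 : Even (i + 1) := Int.even_add_one.mpr h
    simp [h, h1]

/-- The permutation `Θ` of `ℤ`, interchanging `2k-1` and `2k` for every integer `k`. -/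
def Theta : Equiv.Perm ℤ := thetaFun_invol.toPerm

/-- `F_ℤ`: the fixed-point-free involutions of `ℤ` agreeing with `Θ` outside a finite set. -/
def FZ : Set (Equiv.Perm ℤ) :=
  {z | z * z = 1 ∧ (∀ i : ℤ, z i ≠ i) ∧ {i : ℤ | z i ≠ Theta i}.Finite}

open Classical in
/-- The involution `I(z)` of `ℤ` (as a function): its nontrivial cycles are exactly the
pairs `(p,q) ∈ Cyc_ℤ(z)` for which there exists `(a,b) ∈ Cyc_ℤ(z)` with `p < b < q`. -/
def Imap (z : Equiv.Perm ℤ) (i : ℤ) : ℤ :=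
  if ∃ a b : ℤ, a < b ∧ z a = b ∧ min i (z i) < b ∧ b < max i (z i) then z i else i

/-- for `z ∈ F_ℤ`, `I(z)` is the identity if and only if `z = Θ`. -/
theorem Imap_eq_id_iff (z : Equiv.Perm ℤ) (hz : z ∈ FZ) :
    Imap z = id ↔ z = Theta := by
  obtain ⟨hinv, hfpf, hfin⟩ := hz
  have hzz : ∀ j, z (z j) = j := by
    intro j
    have h := congrArg (fun w : Equiv.Perm ℤ => w j) hinv
    simpa [Equiv.Perm.mul_apply] using h
  have hTheta : ∀ j : ℤ, Theta j = if Even j then j - 1 else j + 1 := fun j => rfl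
  constructor
  · intro hId
    have hA : ∀ i, ¬ ∃ a b : ℤ, a < b ∧ z a = b ∧ min i (z i) < b ∧ b < max i (z i) := by
      intro i hc
      have h := congrFun hId i
      simp only [Imap, id_eq] at h
      rw [if_pos hc] at h
      exact hfpf i h
    have hC : ∀ i, z i = i + 1 ∨ z i = i - 1 := by
      intro i
      by_contra hcon
      push_neg at hcon
      obtain ⟨h1, h2⟩ := hcon
      have hne := hfpf i
      have hmm : (min i (z i) = i ∧ max i (z i) = z i) ∨
          (min i (z i) = z i ∧ max i (z i) = i) := by
        rcases le_total i (z i) with h | h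
        · left; exact ⟨min_eq_left h, max_eq_right h⟩
        · right; exact ⟨min_eq_right h, max_eq_left h⟩
      set p := min i (z i) with hp
      set q := max i (z i) with hq
      have hzp : z p = q := by
        rcases hmm with ⟨h3, h4⟩ | ⟨h3, h4⟩
        · rw [h3, h4]
        · rw [h3, h4]; exact hzz i
      have hzq : z q = p := by rw [← hzp, hzz]
      have hpq : p + 2 ≤ q := by rcases hmm with ⟨h3, h4⟩ | ⟨h3, h4⟩ <;> omega
      rcases lt_trichotomy (z (p+1)) (p+1) with h | h | h
      · have hne2 : z (p+1) ≠ p := by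
          intro he
          have h5 := hzz (p+1)
          rw [he] at h5
          omega
        exact hA i ⟨z (p+1), p+1, by omega, hzz (p+1), by omega, by omega⟩
      · exact hfpf (p+1) h
      · have hne2 : z (p+1) ≠ q := by
          intro he
          have h5 := hzz (p+1)
          rw [he] at h5
          omega
        rcases lt_or_gt_of_ne hne2 with h' | h'
        · exact hA i ⟨p+1, z (p+1), h, rfl, by omega, by omega⟩
        · refine hA (p+1) ⟨p, q, by omega, hzp, ?_, ?_⟩
          · rw [min_eq_left (by omega : (p+1:ℤ) ≤ z (p+1))]; omega
          · rw [max_eq_right (by omega : (p+1:ℤ) ≤ z (p+1))]; omega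
    have hstep : ∀ i : ℤ, z i = i + 1 ↔ z (i + 2) = i + 3 := by
      intro i
      constructor
      · intro h
        have h1 : z (i+1) = i := by rw [← h, hzz]
        rcases hC (i+2) with h2 | h2
        · omega
        · exfalso
          have h2' : z (i+2) = i + 1 := by omega
          have h3 := hzz (i+2)
          rw [h2'] at h3
          omega
      · intro h
        have h1 : z (i+3) = i + 2 := by
          have h3 := hzz (i+2); rw [h] at h3; exact h3
        rcases hC (i+1) with h2 | h2
        · exfalso
          have h2' : z (i+1) = i + 2 := by omega
          have h3 := hzz (i+1)
          rw [h2'] at h3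
          omega
        · have h3 : z (i+1) = i := by omega
          have h4 := hzz (i+1)
          rw [h3] at h4
          omega
    have hper : ∀ i : ℤ, ∀ k : ℤ, (z i = i + 1 ↔ z (i + 2*k) = i + 2*k + 1) := by
      intro i k
      induction k using Int.induction_on with
      | zero => simp
      | succ n ih =>
        have hs := hstep (i + 2*(n:ℤ))
        have e : i + 2*((n:ℤ)+1) = i + 2*(n:ℤ) + 2 := by ring
        rw [e]
        constructor
        · intro h0
          have := hs.mp (ih.mp h0)
          omega
        · intro h0
          have h1 : z (i + 2*(n:ℤ) + 2) = i + 2*(n:ℤ) + 3 := by omega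
          exact ih.mpr (hs.mpr h1)
      | pred n ih =>
        have hs := hstep (i + 2*(-(n:ℤ)) - 2)
        rw [show i + 2*(-(n:ℤ)) - 2 + 2 = i + 2*(-(n:ℤ)) from by ring] at hs
        rw [show i + 2*(-(n:ℤ)-1) = i + 2*(-(n:ℤ)) - 2 from by ring]
        constructor
        · intro h0
          have h1 := ih.mp h0
          have h2 := hs.mpr (by omega)
          omega
        · intro h0
          have h2 := hs.mp (by omega)
          have h3 := ih.mpr (by omega)
          omega
    by_contra hzt
    have hex : ∃ i, z i ≠ Theta i := by
      by_contra hno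
      push_neg at hno
      exact hzt (Equiv.ext hno)
    obtain ⟨i0, hi0⟩ := hex
    have hinj : Function.Injective (fun n : ℕ => i0 + 2 * (n:ℤ)) := by
      intro a b hab
      simp only at hab
      omega
    have hmem : ∀ n : ℕ, i0 + 2 * (n:ℤ) ∈ {i : ℤ | z i ≠ Theta i} := by
      intro n
      simp only [Set.mem_setOf_eq]
      by_cases he : Even i0
      · have heT : Theta i0 = i0 - 1 := by rw [hTheta]; simp [he]
        have hz0 : z i0 = i0 + 1 := by
          rcases hC i0 with h | h
          · exact h
          · exfalso; rw [heT] at hi0; exact hi0 h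
        have hzn : z (i0 + 2*(n:ℤ)) = i0 + 2*(n:ℤ) + 1 := (hper i0 n).mp hz0
        have hen : Even (i0 + 2*(n:ℤ)) := he.add ⟨n, by ring⟩
        have : Theta (i0 + 2*(n:ℤ)) = i0 + 2*(n:ℤ) - 1 := by rw [hTheta]; simp [hen]
        omega
      · have heT : Theta i0 = i0 + 1 := by rw [hTheta]; simp [he]
        have hz0 : z i0 ≠ i0 + 1 := by rw [← heT]; exact hi0
        have hzn : z (i0 + 2*(n:ℤ)) ≠ i0 + 2*(n:ℤ) + 1 := fun h => hz0 ((hper i0 n).mpr h)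
        have hzn' : z (i0 + 2*(n:ℤ)) = i0 + 2*(n:ℤ) - 1 := by
          rcases hC (i0 + 2*(n:ℤ)) with h | h
          · exact absurd h hzn
          · exact h
        have hen : ¬ Even (i0 + 2*(n:ℤ)) := by
          intro hc
          exact he (by simpa using hc.sub (⟨n, by ring⟩ : Even (2*(n:ℤ))))
        have : Theta (i0 + 2*(n:ℤ)) = i0 + 2*(n:ℤ) + 1 := by rw [hTheta]; simp [hen]
        omega
    exact (Set.infinite_of_injective_forall_mem hinj hmem) hfin
  · intro h
    subst h
    funext i
    simp only [Imap, id_eq]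
    rw [if_neg]
    rintro ⟨a, b, hab, hzab, h1, h2⟩
    have hT : Theta i = i - 1 ∨ Theta i = i + 1 := by
      rw [hTheta]
      by_cases he : Even i <;> simp [he]
    rcases min_lt_iff.mp h1 with h1' | h1' <;> rcases lt_max_iff.mp h2 with h2' | h2' <;>
      rcases hT with hT | hT <;> omega
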